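/- arXiv:1302.4707 — 2 statements merged into one kernel-verified Lean document; each statement's English description precedes it below -/
import Mathlib

section
/- Let G = (V,E) be a finite simple graph. For each edge e ∈ E let m_e be an even natural number, and let G' be the graph obtained from G by subdividing each edge e = {u,v} into m_e + 1 edges, i.e., replacing e by a path u, x_{e,1}, …, x_{e,m_e}, v through m_e new vertices (so every edge is subdivided into an odd number of pieces). Let m = ∑_{e∈E} m_e be the total number of added vertices. Then the maximum size of an independent set in G' equals the maximum size of an independent set in G plus m/2. -/
open scoped Classical

noncomputable section

/-- The maximum size of an independent set in a graph. -/
def maxIndepSetSize {V : Type*} (G : SimpleGraph V) : ℕ :=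
  sSup {n | ∃ s : Finset V, (∀ u ∈ s, ∀ v ∈ s, ¬ G.Adj u v) ∧ s.card = n}

/-- The adjacency relation of the graph obtained from `G` by subdividing each edge `e`
(with endpoints given by `ends`) into `m e + 1` pieces, through `m e` new vertices.
The new vertices for edge `e` are `(e, 0), …, (e, m e - 1)`, forming a path joined to
the first endpoint of `e` at index `0` and to the second endpoint at index `m e - 1`;
the original edge is removed (it only survives, as is, when `m e = 0`). -/
def SubdivAdj {V : Type*} (G : SimpleGraph V) (m : Sym2 V → ℕ) (ends : Sym2 V → V × V) :
    (V ⊕ Σ e : G.edgeSet, Fin (m e.1)) → (V ⊕ Σ e : G.edgeSet, Fin (m e.1)) → Prop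
  | Sum.inl u, Sum.inl v => G.Adj u v ∧ m s(u, v) = 0
  | Sum.inl u, Sum.inr ⟨e, i⟩ =>
      (u = (ends e.1).1 ∧ (i : ℕ) = 0) ∨ (u = (ends e.1).2 ∧ (i : ℕ) + 1 = m e.1)
  | Sum.inr ⟨e, i⟩, Sum.inl u =>
      (u = (ends e.1).1 ∧ (i : ℕ) = 0) ∨ (u = (ends e.1).2 ∧ (i : ℕ) + 1 = m e.1)
  | Sum.inr ⟨e, i⟩, Sum.inr ⟨e', j⟩ =>
      e.1 = e'.1 ∧ ((i : ℕ) + 1 = (j : ℕ) ∨ (j : ℕ) + 1 = (i : ℕ))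

/-- Count of numbers of parity `r` in `range n`. -/
lemma card_range_parity' (r : ℕ) (hr : r < 2) (n : ℕ) :
    ((Finset.range n).filter (fun i => i % 2 = r)).card = (n + 1 - r) / 2 := by
  induction n with
  | zero => simp; omega
  | succ k ih =>
    rw [Finset.range_add_one, Finset.filter_insert]
    by_cases h : k % 2 = r
    · rw [if_pos h, Finset.card_insert_of_notMem (by simp), ih]
      omega
    · rw [if_neg h, ih]; omega

/-- Count of indices of parity `r` in `Fin n`. -/
lemma card_fin_parity (n r : ℕ) (hr : r < 2) :
    ((Finset.univ : Finset (Fin n)).filter (fun i : Fin n => (i : ℕ) % 2 = r)).card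
      = (n + 1 - r) / 2 := by
  have himg : ((Finset.univ : Finset (Fin n)).filter (fun i : Fin n => (i : ℕ) % 2 = r)).image Fin.val
      = (Finset.range n).filter (fun i => i % 2 = r) := by
    ext b
    simp only [Finset.mem_image, Finset.mem_filter, Finset.mem_univ, true_and, Finset.mem_range]
    constructor
    · rintro ⟨i, hi, rfl⟩; exact ⟨i.isLt, hi⟩
    · rintro ⟨hb, hb2⟩; exact ⟨⟨b, hb⟩, hb2, rfl⟩
  calc ((Finset.univ : Finset (Fin n)).filter (fun i : Fin n => (i : ℕ) % 2 = r)).card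
      = (((Finset.univ : Finset (Fin n)).filter (fun i : Fin n => (i : ℕ) % 2 = r)).image Fin.val).card :=
        (Finset.card_image_of_injective _ Fin.val_injective).symm
    _ = ((Finset.range n).filter (fun i => i % 2 = r)).card := by rw [himg]
    _ = (n + 1 - r) / 2 := card_range_parity' r hr n

/-- An independent set (no two consecutive integers) contained in `[a, a+n)`
has at most `(n+1)/2` elements. -/
lemma noconsec (S : Finset ℕ) (a n : ℕ) (h1 : ∀ i ∈ S, a ≤ i ∧ i < a + n)
    (h2 : ∀ i ∈ S, ∀ j ∈ S, i + 1 ≠ j) : S.card ≤ (n + 1) / 2 := by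
  have := Finset.card_le_card_of_injOn (f := fun i => (i - a) / 2)
    (s := S) (t := Finset.range ((n + 1) / 2)) ?_ ?_
  · simpa using this
  · intro i hi
    have := h1 i hi
    simp only [Finset.mem_coe, Finset.mem_range]
    omega
  · intro i hi j hj hij
    have hij' : (i - a) / 2 = (j - a) / 2 := hij
    by_contra hne
    have hi1 := h1 i hi
    have hj1 := h1 j hj
    have h2a := h2 i hi j hj
    have h2b := h2 j hj i hi
    omega

/-- Observation 1: subdividing every edge of `G` into an odd number of pieces, by adding
an even number `m e` of new vertices on edge `e`, increases the maximum independent set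
size by exactly half the total number `∑ e, m e` of added vertices. -/
theorem maxIndepSetSize_subdivision {V : Type*} [Fintype V] [DecidableEq V]
    (G : SimpleGraph V) [DecidableRel G.Adj]
    (m : Sym2 V → ℕ) (hm : ∀ e ∈ G.edgeSet, Even (m e))
    (ends : Sym2 V → V × V)
    (hends : ∀ e ∈ G.edgeSet, s((ends e).1, (ends e).2) = e)
    (G' : SimpleGraph (V ⊕ Σ e : G.edgeSet, Fin (m e.1)))
    (hAdj : ∀ x y, G'.Adj x y ↔ SubdivAdj G m ends x y) :
    maxIndepSetSize G' = maxIndepSetSize G + (∑ e ∈ G.edgeFinset, m e) / 2 := by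
  classical
  -- basic facts about the endpoints
  have hGA : ∀ e : G.edgeSet, G.Adj (ends e.1).1 (ends e.1).2 := by
    intro e
    rw [← SimpleGraph.mem_edgeSet, hends e.1 e.2]
    exact e.2
  have hEven : ∀ e : G.edgeSet, Even (m e.1) := fun e => hm e.1 e.2
  -- the sets whose sups we take
  set SG : Set ℕ := {n | ∃ s : Finset V, (∀ u ∈ s, ∀ v ∈ s, ¬ G.Adj u v) ∧ s.card = n} with hSG
  set SG' : Set ℕ := {n | ∃ s : Finset (V ⊕ Σ e : G.edgeSet, Fin (m e.1)),
      (∀ u ∈ s, ∀ v ∈ s, ¬ G'.Adj u v) ∧ s.card = n} with hSG'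
  have hneG : SG.Nonempty := ⟨0, ∅, by simp, by simp⟩
  have hneG' : SG'.Nonempty := ⟨0, ∅, by simp, by simp⟩
  have hbddG : BddAbove SG := by
    refine ⟨Fintype.card V, ?_⟩
    rintro n ⟨s, -, rfl⟩
    exact le_trans (Finset.card_le_univ s) (le_of_eq Finset.card_univ)
  have hbddG' : BddAbove SG' := by
    refine ⟨Fintype.card (V ⊕ Σ e : G.edgeSet, Fin (m e.1)), ?_⟩
    rintro n ⟨s, -, rfl⟩
    exact le_trans (Finset.card_le_univ s) (le_of_eq Finset.card_univ)
  have hMIS : maxIndepSetSize G = sSup SG := rfl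
  have hMIS' : maxIndepSetSize G' = sSup SG' := rfl
  -- sum identity
  have hedgeFin : G.edgeSet.toFinset = G.edgeFinset := by
    ext e; simp [SimpleGraph.mem_edgeFinset]
  have hsum : ∑ e : G.edgeSet, m e.1 / 2 = (∑ e ∈ G.edgeFinset, m e) / 2 := by
    have h1 : ∑ e : G.edgeSet, m e.1 / 2 = ∑ e ∈ G.edgeFinset, m e / 2 := by
      rw [← hedgeFin]
      exact Finset.sum_set_coe (f := fun e => m e / 2) (s := G.edgeSet)
    have h2 : ∑ e ∈ G.edgeFinset, m e = 2 * ∑ e ∈ G.edgeFinset, m e / 2 := by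
      rw [Finset.mul_sum]
      refine Finset.sum_congr rfl fun e he => ?_
      obtain ⟨k, hk⟩ := hm e (SimpleGraph.mem_edgeFinset.1 he)
      omega
    omega
  rw [hMIS, hMIS']
  apply le_antisymm
  · -- upper bound
    apply csSup_le hneG'
    rintro n ⟨T, hT, rfl⟩
    -- decompose T
    set s : Finset V := Finset.univ.filter (fun v : V => Sum.inl v ∈ T) with hs_def
    set I : ∀ e : G.edgeSet, Finset (Fin (m e.1)) :=
      fun e => Finset.univ.filter (fun i : Fin (m e.1) => Sum.inr ⟨e, i⟩ ∈ T) with hI_def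
    have hTeq : T = s.image Sum.inl ∪ (Finset.univ.sigma I).image Sum.inr := by
      ext x
      cases x with
      | inl v =>
        simp [hs_def, Finset.mem_sigma]
      | inr p =>
        obtain ⟨e, i⟩ := p
        simp [hI_def, Finset.mem_sigma]
    have hdisj : Disjoint (s.image Sum.inl) ((Finset.univ.sigma I).image Sum.inr) := by
      rw [Finset.disjoint_left]
      rintro x hx hx2
      obtain ⟨a, -, rfl⟩ := Finset.mem_image.1 hx
      obtain ⟨b, -, hb⟩ := Finset.mem_image.1 hx2
      exact absurd hb (by simp)
    have hTcard : T.card = s.card + ∑ e : G.edgeSet, (I e).card := by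
      rw [hTeq, Finset.card_union_of_disjoint hdisj,
        Finset.card_image_of_injective _ Sum.inl_injective,
        Finset.card_image_of_injective _ Sum.inr_injective,
        Finset.card_sigma]
    -- bad edges
    set Bad : Finset G.edgeSet := Finset.univ.filter
      (fun e : G.edgeSet => Sum.inl (ends e.1).1 ∈ T ∧ Sum.inl (ends e.1).2 ∈ T) with hBad_def
    -- key bound per edge
    have hbound : ∀ e : G.edgeSet,
        (I e).card + (if e ∈ Bad then 1 else 0) ≤ m e.1 / 2 := by
      intro e
      obtain ⟨k, hk⟩ := hEven e
      have hcons : ∀ i ∈ (I e).image Fin.val, ∀ j ∈ (I e).image Fin.val, i + 1 ≠ j := by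
        rintro i hi j hj hij
        obtain ⟨i', hi', rfl⟩ := Finset.mem_image.1 hi
        obtain ⟨j', hj', rfl⟩ := Finset.mem_image.1 hj
        have hi'' := (Finset.mem_filter.1 hi').2
        have hj'' := (Finset.mem_filter.1 hj').2
        exact hT _ hi'' _ hj'' ((hAdj _ _).2 ⟨rfl, Or.inl hij⟩)
      have hcard_img : ((I e).image Fin.val).card = (I e).card :=
        Finset.card_image_of_injective _ Fin.val_injective
      by_cases hb : e ∈ Bad
      · -- both endpoints in T
        obtain ⟨h1, h2⟩ := (Finset.mem_filter.1 hb).2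
        have hm0 : m e.1 ≠ 0 := by
          intro h0
          refine hT _ h1 _ h2 ((hAdj _ _).2 ?_)
          exact ⟨hGA e, by rw [hends e.1 e.2]; exact h0⟩
        have hm2 : 2 ≤ m e.1 := by omega
        have hrange : ∀ i ∈ (I e).image Fin.val, 1 ≤ i ∧ i < 1 + (m e.1 - 2) := by
          rintro i hi
          obtain ⟨i', hi', rfl⟩ := Finset.mem_image.1 hi
          have hiT := (Finset.mem_filter.1 hi').2
          have hilt := i'.isLt
          have hne0 : (i' : ℕ) ≠ 0 := by
            intro h0
            exact hT _ h1 _ hiT ((hAdj _ _).2 (Or.inl ⟨rfl, h0⟩))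
          have hnetop : (i' : ℕ) + 1 ≠ m e.1 := by
            intro htop
            exact hT _ h2 _ hiT ((hAdj _ _).2 (Or.inr ⟨rfl, htop⟩))
          omega
        have := noconsec _ 1 (m e.1 - 2) hrange hcons
        rw [hcard_img] at this
        simp only [if_pos hb]
        omega
      · have hrange : ∀ i ∈ (I e).image Fin.val, 0 ≤ i ∧ i < 0 + m e.1 := by
          rintro i hi
          obtain ⟨i', hi', rfl⟩ := Finset.mem_image.1 hi
          exact ⟨Nat.zero_le _, by simpa using i'.isLt⟩
        have := noconsec _ 0 (m e.1) hrange hcons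
        rw [hcard_img] at this
        simp only [if_neg hb]
        omega
    have hsumI : (∑ e : G.edgeSet, (I e).card) + Bad.card ≤ ∑ e : G.edgeSet, m e.1 / 2 := by
      have : ∑ e : G.edgeSet, ((I e).card + (if e ∈ Bad then 1 else 0))
          ≤ ∑ e : G.edgeSet, m e.1 / 2 :=
        Finset.sum_le_sum fun e _ => hbound e
      rwa [Finset.sum_add_distrib, Finset.sum_ite_mem, Finset.univ_inter,
        ← Finset.card_eq_sum_ones Bad] at this
    -- the repaired independent set in G
    set F : Finset V := Bad.image (fun e : G.edgeSet => (ends e.1).1) with hF_def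
    have hs'_def : True := trivial
    have hs'indep : ∀ u ∈ s \ F, ∀ v ∈ s \ F, ¬ G.Adj u v := by
      intro u hu v hv huv
      have hu' := Finset.mem_sdiff.1 hu
      have hv' := Finset.mem_sdiff.1 hv
      have huT : Sum.inl u ∈ T := (Finset.mem_filter.1 hu'.1).2
      have hvT : Sum.inl v ∈ T := (Finset.mem_filter.1 hv'.1).2
      have he : s(u, v) ∈ G.edgeSet := G.mem_edgeSet.2 huv
      set e : G.edgeSet := ⟨s(u, v), he⟩ with he_def
      have hpair : s((ends e.1).1, (ends e.1).2) = s(u, v) := hends e.1 e.2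
      have hcases := Sym2.eq_iff.1 hpair
      have hbad : e ∈ Bad := by
        rw [hBad_def, Finset.mem_filter]
        rcases hcases with ⟨ha, hb⟩ | ⟨ha, hb⟩
        · exact ⟨Finset.mem_univ _, by rw [ha, hb]; exact ⟨huT, hvT⟩⟩
        · exact ⟨Finset.mem_univ _, by rw [ha, hb]; exact ⟨hvT, huT⟩⟩
      have hmem : (ends e.1).1 ∈ F := Finset.mem_image.2 ⟨e, hbad, rfl⟩
      rcases hcases with ⟨ha, hb⟩ | ⟨ha, hb⟩
      · exact hu'.2 (by rw [ha] at hmem; exact hmem)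
      · exact hv'.2 (by rw [ha] at hmem; exact hmem)
    have hs'mem : (s \ F).card ∈ SG := ⟨s \ F, hs'indep, rfl⟩
    have hs'le : (s \ F).card ≤ sSup SG := le_csSup hbddG hs'mem
    have hcard_s : s.card ≤ (s \ F).card + Bad.card := by
      have h1 : s.card ≤ (s \ F).card + F.card := by
        have := Finset.card_sdiff_add_card s F
        have h2 : s.card ≤ (s ∪ F).card := Finset.card_le_card Finset.subset_union_left
        omega
      have h2 : F.card ≤ Bad.card := Finset.card_image_le
      omega
    rw [hTcard, ← hsum]
    omega
  · -- lower bound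
    have hsupmem : sSup SG ∈ SG := Nat.sSup_mem hneG hbddG
    obtain ⟨s₀, hs₀, hs₀card⟩ := hsupmem
    set pick : G.edgeSet → ℕ := fun e => if (ends e.1).2 ∈ s₀ then 0 else 1 with hpick_def
    have hpick_lt : ∀ e, pick e < 2 := by
      intro e
      by_cases h : (ends e.1).2 ∈ s₀ <;> simp [hpick_def, h]
    set T : Finset (V ⊕ Σ e : G.edgeSet, Fin (m e.1)) :=
      s₀.image Sum.inl ∪ (Finset.univ.sigma (fun e : G.edgeSet =>
        Finset.univ.filter (fun i : Fin (m e.1) => (i : ℕ) % 2 = pick e))).image Sum.inr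
      with hT_def
    have hmemT : ∀ x, x ∈ T ↔
        (∃ v ∈ s₀, Sum.inl v = x) ∨
        (∃ p : Σ e : G.edgeSet, Fin (m e.1), ((p.2 : ℕ) % 2 = pick p.1) ∧ Sum.inr p = x) := by
      intro x
      rw [hT_def]
      simp only [Finset.mem_union, Finset.mem_image, Finset.mem_sigma, Finset.mem_filter,
        Finset.mem_univ, true_and]
    have hTindep : ∀ u ∈ T, ∀ v ∈ T, ¬ G'.Adj u v := by
      intro x hx y hy hadj
      rw [hAdj] at hadj
      rw [hmemT] at hx hy
      -- helper: an inl-inr adjacency with chosen parity is impossible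
      have key : ∀ (a : V) (e : G.edgeSet) (i : Fin (m e.1)), a ∈ s₀ →
          ((i : ℕ) % 2 = pick e) →
          ¬ ((a = (ends e.1).1 ∧ (i : ℕ) = 0) ∨ (a = (ends e.1).2 ∧ (i : ℕ) + 1 = m e.1)) := by
        rintro a e i ha hi (⟨rfl, h0⟩ | ⟨rfl, htop⟩)
        · -- a is first endpoint, i = 0, so pick e = 0, so second endpoint in s₀
          have hp0 : pick e = 0 := by omega
          have h2 : (ends e.1).2 ∈ s₀ := by
            by_contra hc
            have h1' : pick e = 1 := by simp [hpick_def, hc]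
            omega
          exact hs₀ _ ha _ h2 (hGA e)
        · -- a is second endpoint ∈ s₀, so pick e = 0, i even, but i+1 = m even
          have hp0 : pick e = 0 := by rw [hpick_def]; simp [ha]
          obtain ⟨k, hk⟩ := hEven e
          omega
      rcases hx with ⟨a, ha, rfl⟩ | ⟨⟨e, i⟩, hi, rfl⟩ <;>
        rcases hy with ⟨b, hb, rfl⟩ | ⟨⟨e', j⟩, hj, rfl⟩
      · exact hs₀ _ ha _ hb hadj.1
      · exact key a e' j ha hj hadj
      · exact key b e i hb hi hadj
      · obtain ⟨heq, hcons⟩ := hadj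
        have : e = e' := Subtype.ext heq
        subst this
        have hi' : (i : ℕ) % 2 = pick e := hi
        have hj' : (j : ℕ) % 2 = pick e := hj
        omega
    have hdisj : Disjoint (s₀.image Sum.inl) ((Finset.univ.sigma (fun e : G.edgeSet =>
        Finset.univ.filter (fun i : Fin (m e.1) => (i : ℕ) % 2 = pick e))).image Sum.inr) := by
      rw [Finset.disjoint_left]
      rintro x hx hx2
      obtain ⟨a, -, rfl⟩ := Finset.mem_image.1 hx
      obtain ⟨b, -, hb⟩ := Finset.mem_image.1 hx2
      exact absurd hb (by simp)
    have hTcard : T.card = sSup SG + (∑ e ∈ G.edgeFinset, m e) / 2 := by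
      rw [hT_def, Finset.card_union_of_disjoint hdisj,
        Finset.card_image_of_injective _ Sum.inl_injective,
        Finset.card_image_of_injective _ Sum.inr_injective,
        Finset.card_sigma, hs₀card, ← hsum]
      congr 1
      refine Finset.sum_congr rfl fun e _ => ?_
      rw [card_fin_parity _ _ (hpick_lt e)]
      obtain ⟨k, hk⟩ := hEven e
      have := hpick_lt e
      omega
    have : T.card ∈ SG' := ⟨T, hTindep, rfl⟩
    rw [hTcard] at this
    exact le_csSup hbddG' this
end
end

section
/- Let β ≥ 1 and let 𝒟 be a finite family of β-fat unit regions in ℝ² with ply at most Δ. Let D ∈ 𝒟 and let p, q be any two points of D. Then there exists a subset S ⊆ 𝒟 with |S| ≤ (2β+1)²·Δ such that p and q lie in the same path-connected component of ℝ² \ ⋃(𝒟 \ S); i.e., the resilience between p and q with respect to 𝒟 is at most (2β+1)²·Δ. -/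
open Metric
open scoped Classical

noncomputable section

/-- The plane ℝ². -/
abbrev Plane := EuclideanSpace ℝ (Fin 2)

/-- The number of visits of a path `π` to a region `D`: the number of connected
components of the preimage `π⁻¹(D)`. -/
def visits {p q : Plane} (π : Path p q) (D : Set Plane) : ℕ :=
  Nat.card (ConnectedComponents ((⇑π) ⁻¹' D : Set unitInterval))

/-- The thickness of a path with respect to a family of regions. -/
def pathThickness (𝒟 : Finset (Set Plane)) {p q : Plane} (π : Path p q) : ℕ :=
  ∑ D ∈ 𝒟, visits π D

/-- The thickness `t(p,q)`: the minimum thickness over all paths from `p` to `q`. -/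
def thickness (𝒟 : Finset (Set Plane)) (p q : Plane) : ℕ :=
  sInf {n | ∃ π : Path p q, pathThickness 𝒟 π = n}

/-- The resilience `r(p,q)`: the minimum number of regions of `𝒟` to remove so that `p`
and `q` are in the same path-connected component of the complement of the rest. -/
def resilience (𝒟 : Finset (Set Plane)) (p q : Plane) : ℕ :=
  sInf {n | ∃ S ⊆ 𝒟, S.card = n ∧ JoinedIn (⋃₀ (↑(𝒟 \ S) : Set (Set Plane)))ᶜ p q}

/-- The resilience of a path: the number of regions of `𝒟` it intersects. -/
def pathResilience (𝒟 : Finset (Set Plane)) {p q : Plane} (π : Path p q) : ℕ :=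
  {D | D ∈ 𝒟 ∧ ∃ s, π s ∈ D}.ncard

/-- Two points are well-separated if their distance is at least `2√3`. -/
def WellSeparated (p q : Plane) : Prop := 2 * Real.sqrt 3 ≤ dist p q

/-- A `β`-fat unit region: a compact connected set squeezed between concentric balls of
radii `1` and `β`. -/
def IsFatUnitRegion (β : ℝ) (D : Set Plane) : Prop :=
  IsCompact D ∧ IsConnected D ∧ ∃ c : Plane, closedBall c 1 ⊆ D ∧ D ⊆ closedBall c β

open MeasureTheory in
open scoped ENNReal in
private lemma vol_cb' (x : Plane) (r : ℝ) :
    MeasureTheory.volume (closedBall x r) = (ENNReal.ofReal r)^2 * ENNReal.ofReal Real.pi := by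
  rw [EuclideanSpace.volume_closedBall]
  norm_num [Real.Gamma_two, Real.sq_sqrt Real.pi_nonneg]

open MeasureTheory
open scoped ENNReal

/-- Lemma (fat regions): inside a `β`-fat unit region of a family of ply at most `Δ`,
any two points have resilience at most `(2β+1)²·Δ`. -/
theorem resilience_inside_fat_region_le_ply
    (β : ℝ) (hβ : 1 ≤ β) (Δ : ℕ)
    (𝒟 : Finset (Set Plane)) (hfat : ∀ D ∈ 𝒟, IsFatUnitRegion β D)
    (hply : ∀ x : Plane, {D | D ∈ 𝒟 ∧ x ∈ D}.ncard ≤ Δ)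
    (D : Set Plane) (hD : D ∈ 𝒟) (p q : Plane) (hp : p ∈ D) (hq : q ∈ D) :
    ∃ S ⊆ 𝒟, (S.card : ℝ) ≤ (2 * β + 1) ^ 2 * (Δ : ℝ) ∧
      JoinedIn (⋃₀ (↑(𝒟 \ S) : Set (Set Plane)))ᶜ p q := by
  obtain ⟨-, -, c, hc1, hc2⟩ := hfat D hD
  choose! ctr hctr1 hctr2 using fun D' (h : D' ∈ 𝒟) => (hfat D' h).2.2
  set S : Finset (Set Plane) := 𝒟.filter (fun D' => (D' ∩ closedBall c β).Nonempty) with hS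
  refine ⟨S, Finset.filter_subset _ _, ?_, ?_⟩
  · -- cardinality bound via volume packing
    set R : ℝ := 2 * β + 1 with hR
    have hR0 : (0:ℝ) ≤ R := by positivity
    -- each region of S has its center within 2β of c
    have hcenter : ∀ D' ∈ S, closedBall (ctr D') 1 ⊆ closedBall c R := by
      intro D' hD'
      rw [hS, Finset.mem_filter] at hD'
      obtain ⟨hmem, x, hxD, hxc⟩ := hD'
      intro y hy
      have h1 : dist x (ctr D') ≤ β := hctr2 D' hmem hxD
      have h2 : dist y (ctr D') ≤ 1 := hy
      have : dist y c ≤ dist y (ctr D') + dist (ctr D') x + dist x c := dist_triangle4 y (ctr D') x c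
      rw [mem_closedBall] at hxc ⊢
      rw [dist_comm (ctr D') x] at this
      linarith
    have hsub : ∀ D' ∈ S, closedBall (ctr D') 1 ⊆ D' := fun D' hD' =>
      hctr1 D' (Finset.mem_filter.mp hD').1
    -- volume inequality
    have key : (S.card : ℝ≥0∞) * (1 * ENNReal.ofReal Real.pi)
        ≤ (Δ : ℝ≥0∞) * ((ENNReal.ofReal R)^2 * ENNReal.ofReal Real.pi) := by
      have step1 : (S.card : ℝ≥0∞) * (1 * ENNReal.ofReal Real.pi)
          = ∑ D' ∈ S, volume (closedBall (ctr D') 1) := by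
        rw [Finset.sum_congr rfl (fun D' _ => vol_cb' (ctr D') 1)]
        simp [Finset.sum_const, ENNReal.ofReal_one, mul_comm]
      have step2 : ∑ D' ∈ S, volume (closedBall (ctr D') 1)
          = ∫⁻ x, (∑ D' ∈ S, (closedBall (ctr D') 1).indicator (fun _ => (1:ℝ≥0∞)) x) := by
        rw [lintegral_finset_sum _ (fun D' _ =>
          (measurable_const.indicator measurableSet_closedBall))]
        simp [lintegral_indicator measurableSet_closedBall]
      have step3 : (∫⁻ x, (∑ D' ∈ S, (closedBall (ctr D') 1).indicator (fun _ => (1:ℝ≥0∞)) x))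
          ≤ ∫⁻ x, (closedBall c R).indicator (fun _ => (Δ : ℝ≥0∞)) x := by
        refine lintegral_mono fun x => ?_
        by_cases hx : x ∈ closedBall c R
        · rw [Set.indicator_of_mem hx]
          have : (∑ D' ∈ S, (closedBall (ctr D') 1).indicator (fun _ => (1:ℝ≥0∞)) x)
              = ((S.filter (fun D' => x ∈ closedBall (ctr D') 1)).card : ℝ≥0∞) := by
            rw [Finset.card_filter]
            push_cast
            refine Finset.sum_congr rfl fun D' _ => ?_
            by_cases h : x ∈ closedBall (ctr D') 1 <;> simp [h]
          rw [this]
          have hsubf : S.filter (fun D' => x ∈ closedBall (ctr D') 1)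
              ⊆ 𝒟.filter (fun D' => x ∈ D') := by
            intro D' hD'
            rw [Finset.mem_filter] at hD' ⊢
            exact ⟨(Finset.mem_filter.mp hD'.1).1, hsub D' hD'.1 hD'.2⟩
          have hcard : (𝒟.filter (fun D' => x ∈ D')).card ≤ Δ := by
            have := hply x
            rwa [show {D | D ∈ 𝒟 ∧ x ∈ D} = ↑(𝒟.filter (fun D' => x ∈ D')) by
              ext; simp, Set.ncard_coe_finset] at this
          exact le_trans (Nat.cast_le (α := ℝ≥0∞).mpr (Finset.card_le_card hsubf))
            (Nat.cast_le (α := ℝ≥0∞).mpr hcard)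
        · rw [Set.indicator_of_notMem hx]
          have : ∀ D' ∈ S, (closedBall (ctr D') 1).indicator (fun _ => (1:ℝ≥0∞)) x = 0 := by
            intro D' hD'
            exact Set.indicator_of_notMem (fun h => hx (hcenter D' hD' h)) _
          simp [Finset.sum_congr rfl this]
      have step4 : (∫⁻ x, (closedBall c R).indicator (fun _ => (Δ : ℝ≥0∞)) x)
          = (Δ : ℝ≥0∞) * ((ENNReal.ofReal R)^2 * ENNReal.ofReal Real.pi) := by
        rw [lintegral_indicator measurableSet_closedBall]
        simp [vol_cb']
      calc (S.card : ℝ≥0∞) * (1 * ENNReal.ofReal Real.pi) = _ := step1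
        _ = _ := step2
        _ ≤ _ := step3
        _ = _ := step4
      -- done
    have hπ0 : ENNReal.ofReal Real.pi ≠ 0 := by
      simp [ENNReal.ofReal_eq_zero, not_le, Real.pi_pos]
    have hπt : ENNReal.ofReal Real.pi ≠ ⊤ := ENNReal.ofReal_ne_top
    rw [one_mul, ← mul_assoc] at key
    rw [ENNReal.mul_le_mul_iff_left hπ0 hπt] at key
    have key2 : (S.card : ℝ≥0∞) ≤ ENNReal.ofReal (R^2 * Δ) := by
      rw [ENNReal.ofReal_mul (by positivity), ENNReal.ofReal_pow hR0]
      rw [mul_comm] at key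
      simpa [ENNReal.ofReal_natCast] using key
    have := (ENNReal.ofReal_le_ofReal_iff (by positivity)).mp
      (by rwa [ENNReal.ofReal_natCast] : ENNReal.ofReal (S.card : ℝ) ≤ ENNReal.ofReal (R^2 * Δ))
    linarith [this]
  · -- the straight segment works
    have hball : closedBall c β ⊆ (⋃₀ (↑(𝒟 \ S) : Set (Set Plane)))ᶜ := by
      intro x hx hmem
      obtain ⟨D', hD', hxD'⟩ := hmem
      simp only [Finset.coe_sdiff, Set.mem_diff, Finset.mem_coe] at hD'
      exact hD'.2 (Finset.mem_filter.mpr ⟨hD'.1, ⟨x, hxD', hx⟩⟩)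
    exact (((convex_closedBall c β).isPathConnected
      (⟨p, hc2 hp⟩)).joinedIn p (hc2 hp) q (hc2 hq)).mono hball
end
end
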